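/- arXiv:2005.07487 — 5 statements merged into one kernel-verified Lean document; each statement's English description precedes it below -/
import Mathlib

section
/- For N ≥ 2, the sum over j = 1,...,N-1 of (1 - q_j)/|1 - q_j|^3, where q_j = e^{2πij/N} are the N-th roots of unity, equals (1/4) · Σ_{j=1}^{N-1} csc(jπ/N). In particular the sum is a real number. -/
open Complex Finset Real

/-- For `N ≥ 2`, `∑_{j=1}^{N-1} (1 - q_j)/|1 - q_j|³ = (1/4) ∑_{j=1}^{N-1} csc(jπ/N)`,
where `q_j = exp(2πij/N)`; in particular the sum is a real number. -/
theorem sum_roots_of_unity_csc (N : ℕ) (hN : 2 ≤ N)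
    (q : ℕ → ℂ) (hq : ∀ j, q j = Complex.exp (2 * Real.pi * Complex.I * j / N)) :
    ∑ j ∈ Finset.Ico 1 N, (1 - q j) / (‖1 - q j‖)^3
      = (((1/4 : ℝ) * ∑ j ∈ Finset.Ico 1 N, 1 / Real.sin (j * Real.pi / N) : ℝ) : ℂ) := by
  have hNpos : (0:ℝ) < N := by positivity
  have hNne : (N:ℂ) ≠ 0 := by exact_mod_cast Nat.cast_ne_zero.mpr (by omega)
  set f : ℕ → ℂ := fun j => (1 - q j) / (‖1 - q j‖)^3 with hf
  -- basic facts for each j in range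
  have hsin : ∀ j ∈ Finset.Ico 1 N, 0 < Real.sin ((j:ℝ) * Real.pi / N) := by
    intro j hj
    rw [Finset.mem_Ico] at hj
    apply Real.sin_pos_of_pos_of_lt_pi
    · have : (1:ℝ) ≤ (j:ℝ) := by exact_mod_cast hj.1
      positivity
    · rw [div_lt_iff₀ hNpos]
      have : (j:ℝ) < N := by exact_mod_cast hj.2
      nlinarith [Real.pi_pos]
  have habs : ∀ j ∈ Finset.Ico 1 N,
      ‖1 - q j‖ = 2 * Real.sin ((j:ℝ) * Real.pi / N) := by
    intro j hj
    have hs := hsin j hj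
    set x : ℝ := (j:ℝ) * Real.pi / N with hx
    have hqj : q j = Complex.exp ((2*x : ℝ) * Complex.I) := by
      rw [hq]
      congr 1
      rw [hx]
      push_cast
      field_simp
    have h1 : (1 - q j) = Complex.ofReal (1 - Real.cos (2*x))
        + Complex.ofReal (- Real.sin (2*x)) * Complex.I := by
      rw [hqj, Complex.exp_mul_I, ← Complex.ofReal_cos, ← Complex.ofReal_sin]
      push_cast
      ring
    rw [h1, Complex.norm_add_mul_I]
    have hsum : (1 - Real.cos (2*x))^2 + (- Real.sin (2*x))^2
        = (2 * Real.sin x)^2 := by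
      have h2 := Real.sin_sq_add_cos_sq (2*x)
      have h3 := Real.cos_two_mul x
      have h4 := Real.sin_sq_add_cos_sq x
      nlinarith
    rw [hsum, Real.sqrt_sq (by positivity)]
  have hconj : ∀ j ∈ Finset.Ico 1 N, q (N - j) = starRingEnd ℂ (q j) := by
    intro j hj
    rw [Finset.mem_Ico] at hj
    rw [hq, hq, ← Complex.exp_conj]
    have harg : (2 * (Real.pi:ℂ) * Complex.I * (↑(N - j):ℂ) / N)
        = 2 * (Real.pi:ℂ) * Complex.I
          + starRingEnd ℂ (2 * (Real.pi:ℂ) * Complex.I * (j:ℂ) / N) := by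
      simp only [map_div₀, map_mul, Complex.conj_I, Complex.conj_ofReal, map_ofNat,
        Complex.conj_natCast]
      rw [Nat.cast_sub hj.2.le]
      field_simp
      ring
    rw [harg, Complex.exp_add, Complex.exp_two_pi_mul_I, one_mul]
  have hmem : ∀ j ∈ Finset.Ico 1 N, N - j ∈ Finset.Ico 1 N := by
    intro j hj
    rw [Finset.mem_Ico] at hj ⊢
    omega
  -- pair sums
  have hpair : ∀ j ∈ Finset.Ico 1 N,
      f j + f (N - j) = ((1 / (2 * Real.sin ((j:ℝ) * Real.pi / N)) : ℝ) : ℂ) := by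
    intro j hj
    have hs := hsin j hj
    set x : ℝ := (j:ℝ) * Real.pi / N with hx
    have h1 : (1 : ℂ) - q (N - j) = starRingEnd ℂ (1 - q j) := by
      rw [hconj j hj, map_sub, map_one]
    have h2 : ‖1 - q (N - j)‖ = ‖1 - q j‖ := by
      rw [h1, Complex.norm_conj]
    have hre : (1 - q j).re = 2 * Real.sin x ^ 2 := by
      have hsq : (‖1 - q j‖)^2 = (2 * Real.sin x)^2 := by
        rw [habs j hj]
      rw [Complex.sq_norm, Complex.normSq_apply] at hsq
      have him : (1 - q j).im ^ 2 = (2 * Real.sin x)^2 - (1 - q j).re ^ 2 := by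
        nlinarith
      -- re(1-q) = 1 - re q ; normSq q = 1
      have habsq : ‖q j‖ = 1 := by
        rw [hq]
        rw [Complex.norm_exp]
        have : (2 * (Real.pi:ℂ) * Complex.I * (j:ℂ) / N).re = 0 := by
          simp [Complex.div_re, Complex.mul_re, Complex.mul_im]
        rw [this, Real.exp_zero]
      have hnq : (q j).re ^ 2 + (q j).im ^ 2 = 1 := by
        have := Complex.sq_norm (q j)
        rw [habsq] at this
        rw [Complex.normSq_apply] at this
        nlinarith
      have hre1 : (1 - q j).re = 1 - (q j).re := by simp
      have him1 : (1 - q j).im = - (q j).im := by simp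
      rw [hre1]
      rw [hre1, him1] at hsq
      nlinarith
    have hz : (1 - q j) + starRingEnd ℂ (1 - q j) = ((4 * Real.sin x ^ 2 : ℝ) : ℂ) := by
      rw [Complex.add_conj, hre]
      push_cast
      ring
    rw [hf]
    simp only
    rw [h2, h1, habs j hj, ← add_div, hz]
    have hsne : Real.sin x ≠ 0 := ne_of_gt hs
    norm_cast
    rw [div_eq_div_iff (by positivity) (by positivity)]
    ring
  -- reindexing j ↦ N - j
  have hreindex : ∑ j ∈ Finset.Ico 1 N, f j = ∑ j ∈ Finset.Ico 1 N, f (N - j) := by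
    refine Finset.sum_nbij' (fun j => N - j) (fun j => N - j) hmem hmem ?_ ?_ ?_
    · intro a ha; rw [Finset.mem_Ico] at ha; show N - (N - a) = a; omega
    · intro a ha; rw [Finset.mem_Ico] at ha; show N - (N - a) = a; omega
    · intro a ha; rw [Finset.mem_Ico] at ha
      show f a = f (N - (N - a))
      exact congrArg f (by omega)
  have hsum2 : (∑ j ∈ Finset.Ico 1 N, f j) * 2
      = ∑ j ∈ Finset.Ico 1 N, ((1 / (2 * Real.sin ((j:ℝ) * Real.pi / N)) : ℝ) : ℂ) := by
    rw [mul_two]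
    nth_rewrite 2 [hreindex]
    rw [← Finset.sum_add_distrib]
    exact Finset.sum_congr rfl hpair
  have hrhs : (((1/4 : ℝ) * ∑ j ∈ Finset.Ico 1 N, 1 / Real.sin ((j:ℝ) * Real.pi / N) : ℝ) : ℂ) * 2
      = ∑ j ∈ Finset.Ico 1 N, ((1 / (2 * Real.sin ((j:ℝ) * Real.pi / N)) : ℝ) : ℂ) := by
    push_cast
    rw [Finset.mul_sum, Finset.sum_mul]
    refine Finset.sum_congr rfl fun j hj => ?_
    ring
  exact mul_right_cancel₀ two_ne_zero (hsum2.trans hrhs.symm)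
end

section
/- For odd N ≥ 5: if b_1, a_2, b_2, a_3, b_3 are real numbers such that b_2 cos(2jπ/N) − a_2 sin(2jπ/N) + (−1)^j (b_3 cos(jπ/N) − a_3 sin(jπ/N)) + b_1 = 0 for all j = 1, 2, ..., N, then b_1 = b_2 = b_3 = a_2 = a_3 = 0. -/
open Real

set_option maxHeartbeats 1000000

/-- For odd `N ≥ 5`: if
`b₂ cos(2jπ/N) − a₂ sin(2jπ/N) + (−1)^j (b₃ cos(jπ/N) − a₃ sin(jπ/N)) + b₁ = 0`
for all `j = 1, …, N`, then `b₁ = b₂ = b₃ = a₂ = a₃ = 0`. -/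
theorem odd_case_coeffs_zero (N : ℕ) (hN : 5 ≤ N) (hOdd : Odd N)
    (b₁ a₂ b₂ a₃ b₃ : ℝ)
    (h : ∀ j : ℕ, 1 ≤ j → j ≤ N →
      b₂ * Real.cos (2 * j * Real.pi / N) - a₂ * Real.sin (2 * j * Real.pi / N)
        + (-1 : ℝ) ^ j * (b₃ * Real.cos (j * Real.pi / N) - a₃ * Real.sin (j * Real.pi / N))
        + b₁ = 0) :
    b₁ = 0 ∧ b₂ = 0 ∧ b₃ = 0 ∧ a₂ = 0 ∧ a₃ = 0 := by
  have hN0 : (0:ℝ) < N := by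
    have : (5:ℝ) ≤ N := by exact_mod_cast hN
    linarith
  have hNne : (N:ℝ) ≠ 0 := ne_of_gt hN0
  set t : ℝ := π / N with ht
  have ht0 : 0 < t := by positivity
  have htlt : t < π / 3 := by
    rw [ht]
    apply div_lt_div_of_pos_left Real.pi_pos (by norm_num)
    exact_mod_cast by omega
  have htle : t ≤ π := by
    rw [ht]
    calc π / N ≤ π / 1 := by
          apply div_le_div_of_nonneg_left Real.pi_pos.le one_pos
          exact_mod_cast by omega
      _ = π := by ring
  have hc1 : Real.cos t < 1 := by
    have := Real.cos_lt_cos_of_nonneg_of_le_pi le_rfl htle ht0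
    simpa using this
  have hc2 : 1/2 < Real.cos t := by
    have := Real.cos_lt_cos_of_nonneg_of_le_pi ht0.le
      (by linarith [Real.pi_pos] : π/3 ≤ π) htlt
    rwa [Real.cos_pi_div_three] at this
  have hs : 0 < Real.sin t := Real.sin_pos_of_pos_of_lt_pi ht0
    (by linarith [Real.pi_pos])
  have hs2 : 0 < Real.sin (2*t) := Real.sin_pos_of_pos_of_lt_pi (by linarith)
    (by linarith [Real.pi_pos])
  -- instantiate
  have h1 := h 1 le_rfl (by omega)
  have h2 := h 2 (by omega) (by omega)
  have hm1 := h (N-1) (by omega) (by omega)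
  have hm2 := h (N-2) (by omega) (by omega)
  have hNN := h N (by omega) le_rfl
  -- clean j = 1
  rw [show (2:ℝ) * (1:ℕ) * π / N = 2*t by push_cast [ht]; ring,
      show ((1:ℕ):ℝ) * π / N = t by push_cast [ht]; ring] at h1
  norm_num at h1
  -- clean j = 2
  rw [show (2:ℝ) * (2:ℕ) * π / N = 2*(2*t) by push_cast [ht]; ring,
      show ((2:ℕ):ℝ) * π / N = 2*t by push_cast [ht]; ring] at h2
  norm_num at h2
  -- clean j = N
  rw [show (2:ℝ) * (N:ℕ) * π / N = 2*π by field_simp,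
      show ((N:ℕ):ℝ) * π / N = π by field_simp,
      Real.cos_two_pi, Real.sin_two_pi, Real.cos_pi, Real.sin_pi,
      Odd.neg_one_pow hOdd] at hNN
  -- clean j = N-1
  have hev : Even (N-1) := Nat.Odd.sub_odd hOdd odd_one
  rw [show (2:ℝ) * ((N-1:ℕ):ℝ) * π / N = -(2*t - 2*π) by
        push_cast [Nat.cast_sub (by omega : 1 ≤ N)]; rw [ht]; field_simp; ring,
      show ((N-1:ℕ):ℝ) * π / N = π - t by
        push_cast [Nat.cast_sub (by omega : 1 ≤ N)]; rw [ht]; field_simp,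
      Real.cos_neg, Real.sin_neg, Real.cos_sub_two_pi, Real.sin_sub_two_pi,
      Real.cos_pi_sub, Real.sin_pi_sub, Even.neg_one_pow hev] at hm1
  -- clean j = N-2
  have hod2 : Odd (N-2) := Nat.Odd.sub_even (by omega) hOdd even_two
  rw [show (2:ℝ) * ((N-2:ℕ):ℝ) * π / N = -(2*(2*t) - 2*π) by
        push_cast [Nat.cast_sub (by omega : 2 ≤ N)]; rw [ht]; field_simp; ring,
      show ((N-2:ℕ):ℝ) * π / N = π - 2*t by
        push_cast [Nat.cast_sub (by omega : 2 ≤ N)]; rw [ht]; field_simp,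
      Real.cos_neg, Real.sin_neg, Real.cos_sub_two_pi, Real.sin_sub_two_pi,
      Real.cos_pi_sub, Real.sin_pi_sub, Odd.neg_one_pow hod2] at hm2
  -- now express double angles
  rw [Real.cos_two_mul, Real.sin_two_mul] at h1 h2 hm1 hm2
  rw [Real.cos_two_mul, Real.sin_two_mul] at h2 hm2
  set c := Real.cos t with hcdef
  set s := Real.sin t with hsdef
  have hsne : s ≠ 0 := ne_of_gt hs
  -- a-part
  have k1 : s * (2 * a₂ * c - a₃) = 0 := by linear_combination (hm1 - h1) / 2
  have k1' : 2 * a₂ * c - a₃ = 0 := by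
    rcases mul_eq_zero.mp k1 with h' | h'
    · exact absurd h' hsne
    · exact h'
  have k2 : s * c * (2 * a₂ * (2*c^2 - 1) + a₃) = 0 := by
    linear_combination (hm2 - h2) / 4
  have hcne : c ≠ 0 := by intro hc0; rw [hc0] at hc2; norm_num at hc2
  have k2' : 2 * a₂ * (2*c^2 - 1) + a₃ = 0 := by
    rcases mul_eq_zero.mp k2 with h' | h'
    · rcases mul_eq_zero.mp h' with h'' | h''
      · exact absurd h'' hsne
      · exact absurd h'' hcne
    · exact h'
  have ha2 : a₂ = 0 := by
    have hfac : (0:ℝ) < 2*c^2 + c - 1 := by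
      nlinarith [mul_pos (show (0:ℝ) < 2*c-1 by linarith) (show (0:ℝ) < c+1 by linarith)]
    have h0 : 2 * a₂ * (2*c^2 + c - 1) = 0 := by linear_combination k1' + k2'
    rcases mul_eq_zero.mp h0 with h' | h'
    · linarith
    · linarith
  have ha3 : a₃ = 0 := by linear_combination 2*c*ha2 - k1'
  -- b-part
  have E1 : b₂ * (2*c^2 - 1) - b₃ * c + b₁ = 0 := by
    linear_combination (h1 + hm1) / 2
  have E2 : b₂ * (2*(2*c^2-1)^2 - 1) + b₃ * (2*c^2 - 1) + b₁ = 0 := by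
    linear_combination (h2 + hm2) / 2
  have EN : b₂ + b₃ + b₁ = 0 := by linear_combination hNN
  have hb1 : b₁ = -b₂ - b₃ := by linarith
  have hcp1 : (0:ℝ) < c + 1 := by linarith
  have G1 : b₃ = 2 * b₂ * (c - 1) := by
    have : (c + 1) * (2 * b₂ * (c - 1) - b₃) = 0 := by
      linear_combination E1 - EN
    rcases mul_eq_zero.mp this with h' | h'
    · linarith
    · linarith
  have G2 : 4 * c^2 * b₂ + b₃ = 0 := by
    have : (c^2 - 1) * (2 * (4 * c^2 * b₂ + b₃)) = 0 := by
      linear_combination E2 - EN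
    rcases mul_eq_zero.mp this with h' | h'
    · exfalso
      nlinarith [mul_pos (show (0:ℝ) < c by linarith) (show (0:ℝ) < 1 - c by linarith)]
    · linarith
  have hb2 : b₂ = 0 := by
    have : 2 * b₂ * (2*c^2 + c - 1) = 0 := by linear_combination G2 - G1
    have hfac : (0:ℝ) < 2*c^2 + c - 1 := by
      nlinarith [mul_pos (show (0:ℝ) < 2*c-1 by linarith) (show (0:ℝ) < c+1 by linarith)]
    rcases mul_eq_zero.mp this with h' | h'
    · rcases mul_eq_zero.mp h' with h'' | h''
      · norm_num at h''
      · exact h''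
    · linarith
  have hb3 : b₃ = 0 := by rw [hb2] at G1; linarith
  have hb1' : b₁ = 0 := by rw [hb2, hb3] at hb1; linarith
  exact ⟨hb1', hb2, hb3, ha2, ha3⟩
end

section
/- Let N ≥ 4, ω_N = e^{2πi/N}, and let A be the N×N circulant matrix with entries A_{k,j} = (1 − ω_N^{j−k})/|1 − ω_N^{j−k}|³ for k ≠ j (exponent taken mod N) and A_{k,k} = 0. Then the eigenvalue λ_k = Σ_{j=1, j≠k}^{N} A_{1,j} ω_N^{(k−1)(j−1)} satisfies λ_k ≠ 0 for all k ∈ {1,...,N−1} except that λ_{(N+1)/2} = 0 when N is odd. -/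
open Complex Finset Real

noncomputable def SS (N q : ℕ) : ℝ := ∑ l ∈ Finset.Ico 1 N, Real.sin (q*(π*l/N)) / Real.sin (π*l/N)^2
noncomputable def VV (N j : ℕ) : ℝ := ∑ l ∈ Finset.Ico 1 N, Real.cos (2*j*(π*l/N)) / Real.sin (π*l/N)
noncomputable def PP (N c : ℕ) : ℝ := ∑ l ∈ Finset.Ico 1 N, Real.sin (c*(π*l/N))

lemma theta_mem {N l : ℕ} (hl : l ∈ Finset.Ico 1 N) : 0 < π*l/N ∧ π*l/N < π := by
  rw [Finset.mem_Ico] at hl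
  have hN0 : (0:ℝ) < N := by
    have : 0 < N := lt_of_lt_of_le (Nat.lt_of_lt_of_le Nat.zero_lt_one hl.1) (le_of_lt hl.2)
    exact_mod_cast this
  have hl1 : (1:ℝ) ≤ l := by exact_mod_cast hl.1
  have hl2 : (l:ℝ) < N := by exact_mod_cast hl.2
  constructor
  · have : (0:ℝ) < l := by linarith
    positivity
  · rw [div_lt_iff₀ hN0]
    nlinarith [Real.pi_pos]

lemma sin_theta_pos {N l : ℕ} (hl : l ∈ Finset.Ico 1 N) : 0 < Real.sin (π*l/N) :=
  Real.sin_pos_of_pos_of_lt_pi (theta_mem hl).1 (theta_mem hl).2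

lemma VV_zero_pos {N : ℕ} (hN : 2 ≤ N) : 0 < VV N 0 := by
  rw [VV]
  apply Finset.sum_pos
  · intro l hl
    have := sin_theta_pos hl
    simp only [Nat.cast_ofNat, CharP.cast_eq_zero, mul_zero, zero_mul, Real.cos_zero]
    positivity
  · exact ⟨1, by simp; omega⟩

lemma SS_one {N : ℕ} : SS N 1 = VV N 0 := by
  rw [SS, VV]
  apply Finset.sum_congr rfl
  intro l hl
  have hs := sin_theta_pos hl
  rw [Nat.cast_one, one_mul, Nat.cast_zero, mul_zero, zero_mul, Real.cos_zero, sq]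
  rw [div_mul_eq_div_div]
  rw [div_self (ne_of_gt hs)]

lemma SS_rec {N m : ℕ} : SS N (2*m+3) = SS N (2*m+1) + 2 * VV N (m+1) := by
  rw [SS, SS, VV, mul_sum, ← Finset.sum_add_distrib]
  apply Finset.sum_congr rfl
  intro l hl
  have hs := sin_theta_pos hl
  set x := π*l/N with hx
  have key : Real.sin ((2*m+3)*x) - Real.sin ((2*m+1)*x) = 2 * Real.cos ((2*(m+1))*x) * Real.sin x := by
    rw [Real.sin_sub_sin]
    have h1 : ((2*m+3)*x - (2*m+1)*x)/2 = x := by push_cast; ring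
    have h2 : ((2*m+3)*x + (2*m+1)*x)/2 = (2*(m+1))*x := by push_cast; ring
    rw [h1, h2]; ring
  have : Real.sin ((2*m+3:ℕ)*x) = Real.sin ((2*m+1:ℕ)*x) + 2 * Real.cos ((2*(m+1):ℕ)*x) * Real.sin x := by
    push_cast
    push_cast at key
    linarith
  rw [this]
  field_simp
  push_cast; ring

lemma PP_pos {N c : ℕ} (hN : 2 ≤ N) (hc : Odd c) (hc1 : 1 ≤ c) (hcN : c < N) : 0 < PP N c := by
  have hN0 : (0:ℝ) < N := by exact_mod_cast Nat.lt_of_lt_of_le Nat.zero_lt_two hN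
  have hNne : (N:ℂ) ≠ 0 := by exact_mod_cast ne_of_gt (by exact_mod_cast hN0 : (0:ℂ).re < N)
  set x : ℝ := c*π/N with hxdef
  have hx0 : 0 < x := by
    have : (1:ℝ) ≤ c := by exact_mod_cast hc1
    positivity
  have hxpi : x < π := by
    rw [hxdef, div_lt_iff₀ hN0]
    have : (c:ℝ) < N := by exact_mod_cast hcN
    nlinarith [Real.pi_pos]
  have hsx : 0 < Real.sin x := Real.sin_pos_of_pos_of_lt_pi hx0 hxpi
  set z : ℂ := Complex.exp (x * Complex.I) with hz
  have hzim : z.im = Real.sin x := by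
    rw [hz, Complex.exp_ofReal_mul_I_im]
  have him : ∀ l : ℕ, (z^l).im = Real.sin (l*x) := by
    intro l
    rw [hz, ← Complex.exp_nat_mul]
    have : (l:ℂ) * (x * Complex.I) = (l*x : ℝ) * Complex.I := by push_cast; ring
    rw [this, Complex.exp_ofReal_mul_I_im]
  have hz1 : z ≠ 1 := by
    intro h
    have : z.im = 0 := by rw [h]; simp
    rw [hzim] at this; linarith
  have hzN : z^N = -1 := by
    rw [hz, ← Complex.exp_nat_mul]
    have hNne' : (N:ℂ) ≠ 0 := by exact_mod_cast (by positivity : (N:ℝ) ≠ 0)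
    have harg : (N:ℂ) * (↑x * Complex.I) = (c:ℂ)*(π:ℂ) * Complex.I := by
      rw [hxdef]; push_cast; field_simp
    rw [harg]
    obtain ⟨t, ht⟩ := hc
    rw [ht]
    push_cast
    rw [show ((2*(t:ℂ)+1)*(π:ℂ))*Complex.I = (t:ℂ)*(2*π*Complex.I) + π*Complex.I by ring]
    rw [Complex.exp_add, Complex.exp_pi_mul_I]
    rw [show ((t:ℂ)*(2*π*Complex.I)) = ((t:ℤ):ℂ)*(2*π*Complex.I) by push_cast; ring]
    rw [Complex.exp_int_mul_two_pi_mul_I]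
    ring
  have hgeom : ∑ l ∈ Finset.range N, z^l = 2/(1-z) := by
    rw [geom_sum_eq hz1, hzN]
    have h1z : (1:ℂ) - z ≠ 0 := fun h => hz1 (by linear_combination -h)
    have hz1' : z - 1 ≠ 0 := fun h => hz1 (by linear_combination h)
    rw [div_eq_div_iff hz1' h1z]
    ring
  have hsum : PP N c = (∑ l ∈ Finset.range N, z^l).im := by
    rw [Complex.im_sum, PP, Finset.range_eq_Ico,
      Finset.sum_eq_sum_Ico_succ_bot (by omega : 0 < N)]
    rw [him 0]
    simp only [Nat.cast_zero, zero_mul, Real.sin_zero, zero_add]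
    apply Finset.sum_congr rfl
    intro l hl
    rw [him l, hxdef]
    congr 1
    field_simp
  rw [hsum, hgeom]
  have h1z : (1:ℂ) - z ≠ 0 := fun h => hz1 (by linear_combination -h)
  rw [show (2:ℂ)/(1-z) = 2*(1-z)⁻¹ by ring]
  have : ((2:ℂ)*(1-z)⁻¹).im = 2 * ((1-z)⁻¹).im := by simp
  rw [this, Complex.inv_im]
  have hns : 0 < Complex.normSq (1-z) := by
    rw [Complex.normSq_pos]; exact h1z
  have : (1-z).im = - Real.sin x := by
    simp [hzim]
  rw [this, neg_neg]
  have : 0 < Real.sin x / Complex.normSq (1-z) := div_pos hsx hns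
  linarith

-- V j − V (j+1) = 2 P (2j+1)
lemma VV_diff {N j : ℕ} : VV N j - VV N (j+1) = 2 * PP N (2*j+1) := by
  rw [VV, VV, PP, mul_sum, ← Finset.sum_sub_distrib]
  apply Finset.sum_congr rfl
  intro l hl
  have hs := sin_theta_pos hl
  set x := π*l/N with hx
  have key : Real.cos ((2*j:ℕ)*x) - Real.cos ((2*(j+1):ℕ)*x) = 2 * Real.sin ((2*j+1:ℕ)*x) * Real.sin x := by
    rw [Real.cos_sub_cos]
    have h1 : ((2*j:ℕ)*x + (2*(j+1):ℕ)*x)/2 = ((2*j+1:ℕ))*x := by push_cast; ring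
    have h2 : ((2*j:ℕ)*x - (2*(j+1):ℕ)*x)/2 = -x := by push_cast; ring
    rw [h1, h2, Real.sin_neg]
    ring
  have key2 : Real.cos ((2*j:ℕ)*x)/Real.sin x - Real.cos ((2*(j+1):ℕ)*x)/Real.sin x
      = 2 * Real.sin ((2*j+1:ℕ)*x) := by
    rw [div_sub_div_same, key]
    field_simp
  push_cast at key2 ⊢
  linarith

lemma SS_N_zero {N : ℕ} (hN : 1 ≤ N) : SS N N = 0 := by
  rw [SS]
  apply Finset.sum_eq_zero
  intro l hl
  have hNne : (N:ℝ) ≠ 0 := by positivity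
  have : (N:ℝ)*(π*l/N) = l*π := by field_simp
  rw [this, Real.sin_nat_mul_pi]
  simp

-- antisymmetry: for q ≤ 2N, SS N (2N − q) = − SS N q
lemma SS_antisym {N q : ℕ} (hq : q ≤ 2*N) (hN : 1 ≤ N) : SS N (2*N - q) = - SS N q := by
  rw [SS, SS, ← Finset.sum_neg_distrib]
  apply Finset.sum_congr rfl
  intro l hl
  have hNne : (N:ℝ) ≠ 0 := by positivity
  have hcast : ((2*N - q : ℕ) : ℝ) = 2*N - q := by
    push_cast [Nat.cast_sub hq]; ring
  have harg : ((2*N - q : ℕ) : ℝ)*(π*l/N) = l*(2*π) - q*(π*l/N) := by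
    rw [hcast]; field_simp
  rw [harg, Real.sin_nat_mul_two_pi_sub]
  ring

lemma pair_sum (f : ℕ → ℝ) (t : ℕ) :
    ∑ l ∈ Finset.Ico 1 (2*t+1), f l = ∑ r ∈ Finset.range t, (f (2*r+1) + f (2*r+2)) := by
  induction t with
  | zero => simp
  | succ t ih =>
    rw [Finset.sum_range_succ, ← ih,
      show 2*(t+1)+1 = (2*t+1)+1+1 by ring,
      Finset.sum_Ico_succ_top (by omega), Finset.sum_Ico_succ_top (by omega)]
    have e1 : 2*t+1+1 = 2*t+2 := by ring
    rw [e1]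
    ring

lemma SS_even_endpoint {N : ℕ} (hN : 4 ≤ N) (hNe : Even N) : 0 < SS N (N-1) := by
  have hN0 : (0:ℝ) < N := by exact_mod_cast (by omega : 0 < N)
  have hNne : (N:ℝ) ≠ 0 := ne_of_gt hN0
  set g : ℕ → ℝ := fun l => (-1:ℝ)^(l+1) / Real.sin (π*l/N) with hg
  obtain ⟨h, hh⟩ := hNe
  have hh2 : N = 2*h := by omega
  have hh4 : 2 ≤ h := by omega
  -- Step A : termwise rewrite
  have hA : SS N (N-1) = ∑ l ∈ Finset.Ico 1 N, g l := by
    rw [SS]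
    apply Finset.sum_congr rfl
    intro l hl
    have hs := sin_theta_pos hl
    have hcast : ((N-1:ℕ):ℝ) = (N:ℝ) - 1 := by
      push_cast [Nat.cast_sub (by omega : 1 ≤ N)]; ring
    have harg : ((N-1:ℕ):ℝ)*(π*l/N) = l*π - π*l/N := by
      rw [hcast]; field_simp
    rw [harg, Real.sin_nat_mul_pi_sub]
    rw [hg]
    have : -((-1:ℝ)^l * Real.sin (π*l/N)) = (-1)^(l+1) * Real.sin (π*l/N) := by
      rw [pow_succ]; ring
    rw [this, sq]
    rw [mul_div_assoc, div_mul_eq_div_div, div_self (ne_of_gt hs)]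
    ring
  -- symmetry of g
  have hsym : ∀ l ∈ Finset.Ico 1 h, g l = g (N - l) := by
    intro l hl
    rw [Finset.mem_Ico] at hl
    have hlN : l ≤ N := by omega
    have hcast : ((N-l:ℕ):ℝ) = (N:ℝ) - l := by push_cast [Nat.cast_sub hlN]; ring
    have harg : π*((N-l:ℕ):ℝ)/N = π - π*l/N := by rw [hcast]; field_simp
    have hsgn : (-1:ℝ)^(N-l+1) = (-1:ℝ)^(l+1) := by
      have hexp : (N-l+1) + (l+1) = N + 2 := by omega
      have h1 : (-1:ℝ)^((N-l+1)+(l+1)) = 1 := by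
        rw [hexp, hh2, show 2*h+2 = 2*(h+1) by ring, pow_mul]
        norm_num
      have h2 : (-1:ℝ)^(l+1) * (-1:ℝ)^(l+1) = 1 := by
        rw [← pow_add, show (l+1)+(l+1) = 2*(l+1) by ring, pow_mul]; norm_num
      calc (-1:ℝ)^(N-l+1) = (-1:ℝ)^(N-l+1) * ((-1:ℝ)^(l+1) * (-1:ℝ)^(l+1)) := by rw [h2]; ring
        _ = ((-1:ℝ)^((N-l+1)+(l+1))) * (-1:ℝ)^(l+1) := by rw [pow_add]; ring
        _ = (-1:ℝ)^(l+1) := by rw [h1]; ring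
    show (-1:ℝ)^(l+1) / Real.sin (π*l/N) = (-1:ℝ)^(N-l+1) / Real.sin (π*(N-l:ℕ)/N)
    rw [harg, Real.sin_pi_sub, hsgn]
  -- split the sum
  have hsplit : ∑ l ∈ Finset.Ico 1 N, g l
      = (∑ l ∈ Finset.Ico 1 h, g l) + g h + ∑ l ∈ Finset.Ico (h+1) N, g l := by
    rw [← Finset.sum_Ico_consecutive g (by omega : 1 ≤ h) (by omega : h ≤ N)]
    rw [Finset.sum_eq_sum_Ico_succ_bot (by omega : h < N) g]
    ring
  have hrefl : ∑ l ∈ Finset.Ico 1 h, g l = ∑ l ∈ Finset.Ico (h+1) N, g l := by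
    apply Finset.sum_nbij' (i := fun l => N - l) (j := fun l => N - l)
    · intro l hl; rw [Finset.mem_Ico] at hl ⊢; omega
    · intro l hl; rw [Finset.mem_Ico] at hl ⊢; omega
    · intro l hl; rw [Finset.mem_Ico] at hl; omega
    · intro l hl; rw [Finset.mem_Ico] at hl; omega
    · intro l hl; exact hsym l hl
  -- value at the middle
  have hgh : g h = (-1:ℝ)^(h+1) := by
    have hhne : (h:ℝ) ≠ 0 := by
      have : h ≠ 0 := by omega
      exact_mod_cast this
    have harg : π*(h:ℝ)/N = π/2 := by
      rw [hh2]; push_cast; field_simp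
    show (-1:ℝ)^(h+1) / Real.sin (π*(h:ℕ)/N) = (-1:ℝ)^(h+1)
    rw [harg, Real.sin_pi_div_two, div_one]
  -- monotonicity: sin increasing on [1, h]
  have hmono : ∀ i j : ℕ, 1 ≤ i → i ≤ j → j ≤ h → Real.sin (π*i/N) ≤ Real.sin (π*j/N) := by
    intro i j hi hij hjh
    have memi : π*(i:ℝ)/N ∈ Set.Icc (-(π/2)) (π/2) := by
      constructor
      · have : (0:ℝ) ≤ π*i/N := by positivity
        nlinarith [Real.pi_pos]
      · rw [div_le_iff₀ hN0, hh2]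
        push_cast
        have : (i:ℝ) ≤ h := by exact_mod_cast le_trans hij hjh
        nlinarith [Real.pi_pos]
    have memj : π*(j:ℝ)/N ∈ Set.Icc (-(π/2)) (π/2) := by
      constructor
      · have : (0:ℝ) ≤ π*j/N := by positivity
        nlinarith [Real.pi_pos]
      · rw [div_le_iff₀ hN0, hh2]
        push_cast
        have : (j:ℝ) ≤ h := by exact_mod_cast hjh
        nlinarith [Real.pi_pos]
    apply Real.strictMonoOn_sin.monotoneOn memi memj
    gcongr
  -- pair positivity
  have hpair : ∀ r : ℕ, 1 ≤ 2*r+1 → 2*r+2 ≤ h → 0 ≤ g (2*r+1) + g (2*r+2) := by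
    intro r _ hr2
    have h1 : g (2*r+1) = 1 / Real.sin (π*(2*r+1:ℕ)/N) := by
      show (-1:ℝ)^(2*r+1+1) / _ = _
      rw [show 2*r+1+1 = 2*(r+1) by ring, pow_mul]
      norm_num
    have h2 : g (2*r+2) = -(1 / Real.sin (π*(2*r+2:ℕ)/N)) := by
      show (-1:ℝ)^(2*r+2+1) / _ = _
      have hpw : (-1:ℝ)^(2*r+2+1) = -1 := by
        rw [show 2*r+2+1 = 2*(r+1)+1 by ring, pow_succ, pow_mul]
        norm_num
      rw [hpw, neg_div, one_div]
    rw [h1, h2]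
    have hs1 : 0 < Real.sin (π*(2*r+1:ℕ)/N) :=
      sin_theta_pos (by rw [Finset.mem_Ico]; omega)
    have hs2 : 0 < Real.sin (π*(2*r+2:ℕ)/N) :=
      sin_theta_pos (by rw [Finset.mem_Ico]; omega)
    have hle : Real.sin (π*(2*r+1:ℕ)/N) ≤ Real.sin (π*(2*r+2:ℕ)/N) := by
      have := hmono (2*r+1) (2*r+2) (by omega) (by omega) hr2
      push_cast at this ⊢
      exact this
    have := one_div_le_one_div_of_le hs1 hle
    linarith
  -- bound for a single positive term
  have hterm : ∀ l : ℕ, 1 ≤ l → l ≤ h → Odd l → 1 ≤ g l := by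
    intro l hl1 hlh hlodd
    obtain ⟨r, hr⟩ := hlodd
    have h1 : g l = 1 / Real.sin (π*(l:ℕ)/N) := by
      show (-1:ℝ)^(l+1) / _ = _
      rw [hr, show 2*r+1+1 = 2*(r+1) by ring, pow_mul]
      norm_num
    have hs1 : 0 < Real.sin (π*(l:ℕ)/N) :=
      sin_theta_pos (by rw [Finset.mem_Ico]; omega)
    have hs2 : Real.sin (π*(l:ℕ)/N) ≤ 1 := Real.sin_le_one _
    rw [h1]
    rw [le_div_iff₀ hs1]
    linarith
  -- assemble: SS N (N-1) = 2*B + g h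
  have hmain : SS N (N-1) = 2*(∑ l ∈ Finset.Ico 1 h, g l) + g h := by
    rw [hA, hsplit, ← hrefl]; ring
  -- case analysis on parity of h
  rcases Nat.even_or_odd h with he | ho
  · -- h even, h = 2t, B ≥ g (2t-1) ≥ 1, g h = -1
    obtain ⟨t, ht⟩ := he
    have ht2 : h = 2*t := by omega
    have ht1 : 1 ≤ t := by omega
    have hsplitB : ∑ l ∈ Finset.Ico 1 h, g l
        = (∑ l ∈ Finset.Ico 1 (2*(t-1)+1), g l) + g (2*(t-1)+1) := by
      rw [show h = (2*(t-1)+1)+1 by omega, Finset.sum_Ico_succ_top (by omega)]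
    have hB1 : 0 ≤ ∑ l ∈ Finset.Ico 1 (2*(t-1)+1), g l := by
      rw [pair_sum]
      apply Finset.sum_nonneg
      intro r hr
      rw [Finset.mem_range] at hr
      exact hpair r (by omega) (by omega)
    have hB2 : 1 ≤ g (2*(t-1)+1) := hterm (2*(t-1)+1) (by omega) (by omega) ⟨t-1, by omega⟩
    have hgh2 : g h = -1 := by
      rw [hgh, ht2, show 2*t+1 = 2*t+1 by rfl, pow_succ, pow_mul]
      norm_num
    rw [hmain, hsplitB, hgh2]
    linarith
  · -- h odd, h = 2t+1, B ≥ 0, g h = 1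
    obtain ⟨t, ht⟩ := ho
    have hB1 : 0 ≤ ∑ l ∈ Finset.Ico 1 h, g l := by
      rw [ht, show 2*t+1 = 2*t+1 by rfl, pair_sum]
      apply Finset.sum_nonneg
      intro r hr
      rw [Finset.mem_range] at hr
      exact hpair r (by omega) (by omega)
    have hgh2 : g h = 1 := by
      rw [hgh, ht, show 2*t+1+1 = 2*(t+1) by ring, pow_mul]
      norm_num
    rw [hmain, hgh2]
    linarith

lemma concave_pos (G : ℕ → ℝ) (M : ℕ)
    (h0 : 0 < G 0) (hM : 0 ≤ G M)
    (hdec : ∀ i j : ℕ, i < j → j < M → G (j+1) - G j < G (i+1) - G i) :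
    ∀ m, m < M → 0 < G m := by
  intro m hmM
  by_contra hcon
  push_neg at hcon
  rcases Nat.eq_zero_or_pos m with hm0 | hm1
  · rw [hm0] at hcon; linarith
  set D : ℕ → ℝ := fun i => G (i+1) - G i with hD
  -- G m - G 0 = ∑_{i<m} D i
  have hsum1 : ∑ i ∈ Finset.range m, D i = G m - G 0 := Finset.sum_range_sub G m
  have hlow : ∀ i ∈ Finset.range m, D (m-1) ≤ D i := by
    intro i hi
    rw [Finset.mem_range] at hi
    rcases Nat.lt_or_ge i (m-1) with h | h
    · exact le_of_lt (hdec i (m-1) h (by omega))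
    · have : i = m-1 := by omega
      rw [this]
  have hA : (m:ℝ) * D (m-1) ≤ G m - G 0 := by
    rw [← hsum1]
    calc (m:ℝ) * D (m-1) = (Finset.range m).card • D (m-1) := by
          simp [nsmul_eq_mul]
      _ ≤ ∑ i ∈ Finset.range m, D i := Finset.card_nsmul_le_sum _ _ _ hlow
  have hDm1 : D (m-1) < 0 := by
    have hm' : (0:ℝ) < m := by exact_mod_cast hm1
    nlinarith
  have hDm : D m < 0 := by
    have h1 := hdec (m-1) m (by omega) hmM
    have h2 : G ((m-1)+1) - G (m-1) < 0 := hDm1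
    show G (m+1) - G m < 0
    linarith
  -- G M - G m = ∑_{i < M-m} D (m+i)
  have hsum2 : ∑ i ∈ Finset.range (M-m), D (m+i) = G M - G m := by
    have := Finset.sum_range_sub (fun i => G (m+i)) (M-m)
    rw [show m + (M-m) = M by omega, show m + 0 = m by omega] at this
    rw [← this]
    apply Finset.sum_congr rfl
    intro i _
    show G (m+i+1) - G (m+i) = G (m+(i+1)) - G (m+i)
    rw [show m+i+1 = m+(i+1) by omega]
  have hup : ∀ i ∈ Finset.range (M-m), D (m+i) ≤ D m := by
    intro i hi
    rw [Finset.mem_range] at hi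
    rcases Nat.eq_zero_or_pos i with h0' | h1'
    · rw [h0', Nat.add_zero]
    · exact le_of_lt (hdec m (m+i) (by omega) (by omega))
  have hB : G M - G m ≤ (M-m:ℕ) * D m := by
    rw [← hsum2]
    calc ∑ i ∈ Finset.range (M-m), D (m+i)
        ≤ (Finset.range (M-m)).card • D m := Finset.sum_le_card_nsmul _ _ _ hup
      _ = (M-m:ℕ) * D m := by simp [nsmul_eq_mul]
  have hMm : (1:ℝ) ≤ (M-m:ℕ) := by
    have : 1 ≤ M - m := by omega
    exact_mod_cast this
  nlinarith [hB, hDm, hcon, hM]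

lemma exp_prod_neg (x : ℝ) : Complex.exp ((x:ℂ)*Complex.I) * Complex.exp (-(x:ℂ)*Complex.I) = 1 := by
  rw [← Complex.exp_add, show (x:ℂ)*Complex.I + -(x:ℂ)*Complex.I = 0 by ring, Complex.exp_zero]

lemma one_sub_exp (x : ℝ) :
    1 - Complex.exp (((2*x:ℝ):ℂ)*Complex.I)
      = Complex.exp ((x:ℂ)*Complex.I) * (-2*Complex.I*(Real.sin x : ℂ)) := by
  rw [Complex.ofReal_sin, Complex.sin]
  have e2 : Complex.exp ((x:ℂ)*Complex.I) * Complex.exp ((x:ℂ)*Complex.I)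
      = Complex.exp (((2*x:ℝ):ℂ)*Complex.I) := by
    rw [← Complex.exp_add]; push_cast; ring_nf
  have e1 := exp_prod_neg x
  have expand : Complex.exp ((x:ℂ)*Complex.I) * (-2*Complex.I*((Complex.exp (-(x:ℂ)*Complex.I) - Complex.exp ((x:ℂ)*Complex.I)) * Complex.I / 2))
      = Complex.exp ((x:ℂ)*Complex.I) * Complex.exp (-(x:ℂ)*Complex.I)
        - Complex.exp ((x:ℂ)*Complex.I) * Complex.exp ((x:ℂ)*Complex.I) := by
    have hI : Complex.I * Complex.I = -1 := Complex.I_mul_I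
    field_simp
    ring_nf
    rw [Complex.I_sq]
    ring
  rw [expand, e1, e2]

lemma abs_one_sub (x : ℝ) (hs : 0 < Real.sin x) :
    ‖1 - Complex.exp (((2*x:ℝ):ℂ)*Complex.I)‖ = 2*Real.sin x := by
  rw [one_sub_exp x, norm_mul]
  have h1 : ‖Complex.exp ((x:ℂ)*Complex.I)‖ = 1 := Complex.norm_exp_ofReal_mul_I x
  rw [h1, one_mul]
  have : (-2*Complex.I*(Real.sin x : ℂ)) = ((-2*Real.sin x : ℝ):ℂ) * Complex.I := by push_cast; ring
  rw [this, norm_mul, Complex.norm_I, mul_one, Complex.norm_real, Real.norm_eq_abs]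
  rw [abs_of_neg (by linarith : (-2*Real.sin x:ℝ) < 0)]
  ring

lemma term_eq' (x : ℝ) (hs : 0 < Real.sin x) (m : ℕ) :
    ((1 - Complex.exp (((2*x:ℝ):ℂ)*Complex.I)) / (‖1 - Complex.exp (((2*x:ℝ):ℂ)*Complex.I)‖)^3)
        * Complex.exp (((2*m*x:ℝ):ℂ)*Complex.I)
    = -Complex.I * Complex.exp ((((2*m+1)*x : ℝ):ℂ) * Complex.I) / (((4*(Real.sin x)^2 : ℝ)):ℂ) := by
  rw [abs_one_sub x hs, one_sub_exp x]
  have hcomb : Complex.exp ((x:ℂ)*Complex.I) * Complex.exp (((2*m*x:ℝ):ℂ)*Complex.I)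
      = Complex.exp ((((2*m+1)*x : ℝ):ℂ) * Complex.I) := by
    rw [← Complex.exp_add]; push_cast; ring_nf
  have hsne : (Real.sin x : ℂ) ≠ 0 := by
    exact_mod_cast ne_of_gt hs
  have h2 : ((2*Real.sin x : ℝ):ℂ) ≠ 0 := by push_cast; simpa using hsne
  rw [← hcomb]
  push_cast
  have hsC : Complex.sin (x:ℂ) ≠ 0 := by
    rw [← Complex.ofReal_sin]; exact_mod_cast ne_of_gt hs
  have key : Complex.sin (x:ℂ) * ((Complex.sin (x:ℂ))⁻¹)^3 = ((Complex.sin (x:ℂ))⁻¹)^2 := by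
    field_simp
  field_simp
  ring

lemma exp_odd_pi (q : ℕ) (hq : Odd q) : Complex.exp (((q*π:ℝ):ℂ)*Complex.I) = -1 := by
  have : (((q*π:ℝ)):ℂ)*Complex.I = (q:ℂ)*((π:ℂ)*Complex.I) := by push_cast; ring
  rw [this, Complex.exp_nat_mul, Complex.exp_pi_mul_I]
  exact hq.neg_one_pow

lemma term_pair (x : ℝ) (q : ℕ) (hq : Odd q) :
    -Complex.I * Complex.exp (((q*x:ℝ):ℂ)*Complex.I)
      + -Complex.I * Complex.exp (((q*(π-x):ℝ):ℂ)*Complex.I)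
    = 2 * ((Real.sin (q*x) : ℝ):ℂ) := by
  have hsplit : (((q*(π-x):ℝ)):ℂ)*Complex.I = ((q*π:ℝ):ℂ)*Complex.I + ((-(q*x):ℝ):ℂ)*Complex.I := by
    push_cast; ring
  rw [hsplit, Complex.exp_add, exp_odd_pi q hq]
  rw [Complex.ofReal_sin, Complex.sin]
  have h1 : ((-(q*x):ℝ):ℂ)*Complex.I = -((q*x:ℝ):ℂ)*Complex.I := by push_cast; ring
  rw [h1]
  ring

lemma lam_formula (N m : ℕ) (hN : 4 ≤ N) (ω : ℂ) (hω : ω = Complex.exp (2 * ↑π * Complex.I / N)) :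
    ∑ l ∈ Finset.Ico 1 N, ((1 - ω ^ l) / (‖1 - ω ^ l‖)^3) * ω ^ (m * l)
    = ((SS N (2*m+1) / 4 : ℝ) : ℂ) := by
  have hN0 : (0:ℝ) < N := by exact_mod_cast (by omega : 0 < N)
  have hNne : (N:ℝ) ≠ 0 := ne_of_gt hN0
  have hNneC : (N:ℂ) ≠ 0 := by exact_mod_cast hNne
  have hpow : ∀ j : ℕ, ω ^ j = Complex.exp (((2*(π*j/N):ℝ):ℂ)*Complex.I) := by
    intro j
    rw [hω, ← Complex.exp_nat_mul]
    congr 1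
    push_cast
    field_simp
  set F : ℕ → ℂ := fun l =>
    -Complex.I * Complex.exp ((((2*m+1)*(π*l/N) : ℝ):ℂ) * Complex.I) / (((4*(Real.sin (π*l/N))^2 : ℝ)):ℂ)
    with hF
  have hterm : ∀ l ∈ Finset.Ico 1 N,
      ((1 - ω ^ l) / (‖1 - ω ^ l‖)^3) * ω ^ (m * l) = F l := by
    intro l hl
    have hs := sin_theta_pos hl
    rw [hpow l, hpow (m*l)]
    have e1 : (2*(π*(l:ℝ)/N):ℝ) = 2*(π*l/N) := by ring
    have e2 : (2*(π*((m*l:ℕ):ℝ)/N):ℝ) = 2*(m:ℝ)*(π*l/N) := by push_cast; ring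
    rw [e1, e2]
    exact term_eq' (π*l/N) hs m
  rw [Finset.sum_congr rfl hterm]
  -- reflection
  have hreflmem : ∀ l ∈ Finset.Ico 1 N, N - l ∈ Finset.Ico 1 N := by
    intro l hl; rw [Finset.mem_Ico] at hl ⊢; omega
  have hrefl : ∑ l ∈ Finset.Ico 1 N, F l = ∑ l ∈ Finset.Ico 1 N, F (N - l) := by
    apply Finset.sum_nbij' (i := fun l => N - l) (j := fun l => N - l)
    · exact hreflmem
    · exact hreflmem
    · intro l hl; rw [Finset.mem_Ico] at hl; omega
    · intro l hl; rw [Finset.mem_Ico] at hl; omega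
    · intro l hl
      rw [Finset.mem_Ico] at hl
      rw [show N - (N - l) = l by omega]
  -- F l + F (N-l)
  have hpair : ∀ l ∈ Finset.Ico 1 N,
      F l + F (N - l) = ((Real.sin ((2*m+1)*(π*l/N)) / (2*(Real.sin (π*l/N))^2) : ℝ):ℂ) := by
    intro l hl
    rw [Finset.mem_Ico] at hl
    have hs := sin_theta_pos (by rw [Finset.mem_Ico]; exact hl)
    have hlN : l ≤ N := by omega
    have hcast : ((N-l:ℕ):ℝ) = (N:ℝ) - l := by push_cast [Nat.cast_sub hlN]; ring
    have hargNl : π*((N-l:ℕ):ℝ)/N = π - π*l/N := by rw [hcast]; field_simp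
    have hFNl : F (N - l)
        = -Complex.I * Complex.exp ((((2*m+1)*(π - π*l/N) : ℝ):ℂ) * Complex.I)
            / (((4*(Real.sin (π*l/N))^2 : ℝ)):ℂ) := by
      rw [hF]
      simp only
      rw [hargNl, Real.sin_pi_sub]
    rw [hFNl, hF]
    simp only
    rw [← add_div]
    have hq : Odd (2*m+1) := ⟨m, by ring⟩
    have := term_pair (π*l/N) (2*m+1) hq
    push_cast at this ⊢
    rw [this]
    have hsne : ((Real.sin (π*l/N) : ℝ):ℂ) ≠ 0 := by exact_mod_cast ne_of_gt hs
    field_simp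
    ring
  -- assemble
  have h2 : (2:ℂ) * ∑ l ∈ Finset.Ico 1 N, F l
      = ∑ l ∈ Finset.Ico 1 N, ((Real.sin ((2*m+1)*(π*l/N)) / (2*(Real.sin (π*l/N))^2) : ℝ):ℂ) := by
    rw [two_mul]
    nth_rewrite 2 [hrefl]
    rw [← Finset.sum_add_distrib]
    exact Finset.sum_congr rfl hpair
  have h3 : ∑ l ∈ Finset.Ico 1 N, ((Real.sin ((2*m+1)*(π*l/N)) / (2*(Real.sin (π*l/N))^2) : ℝ):ℂ)
      = ((SS N (2*m+1) / 2 : ℝ):ℂ) := by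
    rw [← Complex.ofReal_sum]
    congr 1
    rw [SS, Finset.sum_div]
    apply Finset.sum_congr rfl
    intro l hl
    have hs := sin_theta_pos hl
    push_cast
    rw [div_div]
    ring_nf
  rw [h3] at h2
  have h4 : ∑ l ∈ Finset.Ico 1 N, F l = ((SS N (2*m+1):ℝ) : ℂ)/4 := by
    push_cast at h2
    linear_combination h2 / 2
  rw [h4]
  push_cast
  ring

lemma VV_step {N r : ℕ} (hN : 2 ≤ N) (hr : 2*r+1 < N) : VV N (r+1) < VV N r := by
  have h := VV_diff (N := N) (j := r)
  have hp := PP_pos (N := N) (c := 2*r+1) hN ⟨r, by ring⟩ (by omega) hr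
  linarith

lemma VV_lt {N : ℕ} (hN : 2 ≤ N) : ∀ b a : ℕ, a < b → 2*b ≤ N → VV N b < VV N a := by
  intro b
  induction b with
  | zero => intro a h h2; exact absurd h (Nat.not_lt_zero a)
  | succ c ih =>
    intro a hab hbN
    have hstep : VV N (c+1) < VV N c := VV_step hN (by omega)
    rcases Nat.lt_or_ge a c with h | h
    · exact lt_trans hstep (ih a h (by omega))
    · have : a = c := by omega
      rw [this]; exact hstep

lemma SS_pos {N q : ℕ} (hN : 4 ≤ N) (hq : Odd q) (hq1 : 1 ≤ q) (hqN : q < N) : 0 < SS N q := by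
  obtain ⟨m, hm⟩ := hq
  set G : ℕ → ℝ := fun j => SS N (2*j+1) with hG
  have hGdec : ∀ i j : ℕ, i < j → 2*(j+1) ≤ N → G (j+1) - G j < G (i+1) - G i := by
    intro i j hij hjN
    have hi : G (i+1) - G i = 2 * VV N (i+1) := by
      rw [hG]; simp only
      have := SS_rec (N := N) (m := i)
      rw [show 2*(i+1)+1 = 2*i+3 by ring]
      linarith
    have hj : G (j+1) - G j = 2 * VV N (j+1) := by
      rw [hG]; simp only
      have := SS_rec (N := N) (m := j)
      rw [show 2*(j+1)+1 = 2*j+3 by ring]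
      linarith
    rw [hi, hj]
    have := VV_lt (by omega : 2 ≤ N) (j+1) (i+1) (by omega) hjN
    linarith
  have hG0 : 0 < G 0 := by
    rw [hG]; simp only
    rw [show 2*0+1 = 1 by ring, SS_one]
    exact VV_zero_pos (by omega)
  rcases Nat.even_or_odd N with heN | hoN
  · -- N even, N = 2*h, M = h-1
    obtain ⟨h, hh⟩ := heN
    have hh2 : N = 2*h := by omega
    have hMend : 0 < G (h-1) := by
      rw [hG]; simp only
      rw [show 2*(h-1)+1 = N-1 by omega]
      exact SS_even_endpoint hN ⟨h, hh⟩
    rcases Nat.lt_or_ge m (h-1) with hm' | hm'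
    · have hpos := concave_pos G (h-1) hG0 (le_of_lt hMend)
        (fun i j hij hjM => hGdec i j hij (by omega)) m hm'
      rw [hm]
      exact hpos
    · have hmeq : m = h-1 := by omega
      rw [hm, hmeq]
      exact hMend
  · -- N odd, N = 2*M+1
    obtain ⟨M, hM⟩ := hoN
    have hMend : G M = 0 := by
      rw [hG]; simp only
      rw [show 2*M+1 = N by omega]
      exact SS_N_zero (by omega)
    have hmM : m < M := by omega
    have hpos := concave_pos G M hG0 (le_of_eq hMend.symm)
      (fun i j hij hjM => hGdec i j hij (by omega)) m hmM
    rw [hm]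
    exact hpos

/-- For `N ≥ 4`, the circulant-matrix eigenvalues
`λ_k = ∑_{l=1}^{N-1} (1 − ω^l)/|1 − ω^l|³ · ω^{(k−1)l}` (where `ω = e^{2πi/N}`, this is
`∑_{j≠1} A_{1,j} ω^{(k−1)(j−1)}` after the substitution `l = j − 1`) satisfy
`λ_k ≠ 0` for all `k ∈ {1,…,N−1}`, except that `λ_{(N+1)/2} = 0` when `N` is odd. -/
theorem circulant_eigenvalues_nonzero (N : ℕ) (hN : 4 ≤ N)
    (ω : ℂ) (hω : ω = Complex.exp (2 * Real.pi * Complex.I / N))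
    (lam : ℕ → ℂ)
    (hlam : ∀ k, lam k = ∑ l ∈ Finset.Ico 1 N,
        ((1 - ω ^ l) / (‖1 - ω ^ l‖)^3) * ω ^ ((k - 1) * l)) :
    ∀ k, 1 ≤ k → k ≤ N - 1 →
      ((Odd N ∧ k = (N + 1) / 2) → lam k = 0) ∧
      (¬(Odd N ∧ k = (N + 1) / 2) → lam k ≠ 0) := by
  intro k hk1 hkN
  have hval : lam k = ((SS N (2*(k-1)+1) / 4 : ℝ) : ℂ) := by
    rw [hlam k]
    exact lam_formula N (k-1) hN ω hω
  set q : ℕ := 2*(k-1)+1 with hq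
  have hqodd : Odd q := ⟨k-1, rfl⟩
  constructor
  · rintro ⟨hNodd, hkval⟩
    have hqN : q = N := by
      obtain ⟨t, ht⟩ := hNodd
      omega
    rw [hval, hqN, SS_N_zero (by omega)]
    norm_num
  · intro hnot
    have hqneN : q ≠ N := by
      intro hqN
      apply hnot
      have hNodd : Odd N := hqN ▸ hqodd
      obtain ⟨t, ht⟩ := id hNodd
      exact ⟨hNodd, by omega⟩
    have hSne : SS N q ≠ 0 := by
      rcases Nat.lt_or_ge q N with hlt | hge
      · exact ne_of_gt (SS_pos hN hqodd (by omega) hlt)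
      · -- q > N
        have hqgt : N < q := by omega
        have hq2N : q ≤ 2*N := by omega
        have hanti := SS_antisym (N := N) (q := q) hq2N (by omega)
        have hq' : Odd (2*N - q) := by
          obtain ⟨t, ht⟩ := hqodd
          exact ⟨N - t - 1, by omega⟩
        have hpos := SS_pos hN hq' (by omega) (by omega)
        intro h0
        rw [h0] at hanti
        linarith
    rw [hval]
    intro hcontra
    apply hSne
    have : (SS N q / 4 : ℝ) = 0 := by exact_mod_cast hcontra
    linarith
end

section
/- Let m_1, m_2, m_3, m_4 be positive reals, q_1 = e^{2πi/3}, q_2 = e^{4πi/3}, q_3 = 1, and suppose there exist ω > 0 and c_0 ∈ ℂ with c_0 = (m_1 q_1 + m_2 q_2 + m_3 q_3)/(m_1+m_2+m_3+m_4) such that the central configuration equations Σ_{j≠k, 1≤j≤4} m_j (x_j − x_k)/|x_j − x_k|³ = −ω²(x_k − c_0) hold for k = 1,2,3,4, where x_j = q_j for j ≤ 3 and x_4 = 0. Then m_1 = m_2 = m_3. -/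
open Complex Finset

/-- Planar 4-body problem: three bodies at the cube roots of unity and a fourth at the
origin.  If the central configuration equations hold with center of mass `c₀`, then
the three polygon masses are equal. -/
theorem four_body_equal_masses
    (q₁ q₂ : ℂ)
    (hq₁ : q₁ = Complex.exp (2 * Real.pi * Complex.I / 3))
    (hq₂ : q₂ = Complex.exp (4 * Real.pi * Complex.I / 3))
    (m : Fin 4 → ℝ) (hm : ∀ j, 0 < m j)
    (x : Fin 4 → ℂ) (hx : x = ![q₁, q₂, 1, 0])
    (ω : ℝ) (hω : 0 < ω)
    (c₀ : ℂ)
    (hc₀ : c₀ = ((m 0 : ℂ) * q₁ + (m 1 : ℂ) * q₂ + (m 2 : ℂ) * 1)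
        / ((m 0 : ℝ) + m 1 + m 2 + m 3 : ℝ))
    (hcc : ∀ k : Fin 4,
      ∑ j ∈ Finset.univ.erase k,
          (m j : ℂ) * (x j - x k) / (‖x j - x k‖)^3
        = -((ω : ℂ)^2) * (x k - c₀)) :
    m 0 = m 1 ∧ m 1 = m 2 := by
  set s := Real.sqrt 3 with hsdef
  have hs3 : s ^ 2 = 3 := Real.sq_sqrt (by norm_num)
  have hs1 : 1 < s := by nlinarith [Real.sqrt_nonneg 3]
  clear_value s
  -- explicit cube roots of unity
  have h1 : q₁ = ((-(1/2) : ℝ) : ℂ) + ((s / 2 : ℝ) : ℂ) * I := by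
    have h : (2 * Real.pi * Complex.I / 3) = ((2 * Real.pi / 3 : ℝ) : ℂ) * I := by
      push_cast; ring
    rw [hq₁, h, Complex.exp_mul_I, ← Complex.ofReal_cos, ← Complex.ofReal_sin]
    have hc : Real.cos (2 * Real.pi / 3) = -(1/2) := by
      rw [show 2 * Real.pi / 3 = Real.pi - Real.pi / 3 by ring, Real.cos_pi_sub,
        Real.cos_pi_div_three]
    have hs : Real.sin (2 * Real.pi / 3) = s / 2 := by
      rw [show 2 * Real.pi / 3 = Real.pi - Real.pi / 3 by ring, Real.sin_pi_sub,
        Real.sin_pi_div_three, hsdef]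
    rw [hc, hs]
  have htc : ((s : ℝ) : ℂ) ^ 2 = 3 := by norm_cast
  have h2 : q₂ = ((-(1/2) : ℝ) : ℂ) - ((s / 2 : ℝ) : ℂ) * I := by
    have hsq : q₂ = q₁ * q₁ := by
      rw [hq₁, hq₂, ← Complex.exp_add]; ring_nf
    rw [hsq, h1]
    push_cast
    linear_combination (Complex.I^2/4) * htc + (3/4:ℂ) * Complex.I_sq
  subst hx
  -- absolute values
  have habs1 : ‖q₁‖ = 1 := by
    rw [h1, Complex.norm_add_mul_I,
      show (-(1/2):ℝ)^2 + (s/2)^2 = 1 by nlinarith, Real.sqrt_one]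
  have habs2 : ‖q₂‖ = 1 := by
    have : q₂ = ((-(1/2) : ℝ) : ℂ) + ((-(s / 2) : ℝ) : ℂ) * I := by
      rw [h2]; push_cast; ring
    rw [this, Complex.norm_add_mul_I,
      show (-(1/2):ℝ)^2 + (-(s/2))^2 = 1 by nlinarith, Real.sqrt_one]
  have habs1' : ‖q₁ - 1‖ = s := by
    have : q₁ - 1 = ((-(3/2) : ℝ) : ℂ) + ((s / 2 : ℝ) : ℂ) * I := by
      rw [h1]; push_cast; ring
    rw [this, Complex.norm_add_mul_I,
      show (-(3/2):ℝ)^2 + (s/2)^2 = 3 by nlinarith]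
    rw [hsdef]
  have habs2' : ‖q₂ - 1‖ = s := by
    have : q₂ - 1 = ((-(3/2) : ℝ) : ℂ) + ((-(s / 2) : ℝ) : ℂ) * I := by
      rw [h2]; push_cast; ring
    rw [this, Complex.norm_add_mul_I,
      show (-(3/2):ℝ)^2 + (-(s/2))^2 = 3 by nlinarith]
    rw [hsdef]
  have hz : ∀ k : Fin 4, (m k : ℂ) * ((![q₁, q₂, 1, 0]) k - (![q₁, q₂, 1, 0]) k) /
      (‖(![q₁, q₂, 1, 0]) k - (![q₁, q₂, 1, 0]) k‖)^3 = 0 := by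
    intro k; simp
  have eqA := hcc 3
  have eqB := hcc 2
  have hset3 : (Finset.univ.erase (3 : Fin 4)) = {0, 1, 2} := by decide
  have hset2 : (Finset.univ.erase (2 : Fin 4)) = {0, 1, 3} := by decide
  rw [hset3, Finset.sum_insert (by decide), Finset.sum_insert (by decide),
    Finset.sum_singleton] at eqA
  rw [hset2, Finset.sum_insert (by decide), Finset.sum_insert (by decide),
    Finset.sum_singleton] at eqB
  simp only [Matrix.cons_val_zero, Matrix.cons_val_one, Matrix.head_cons,
    Matrix.cons_val_two, Matrix.tail_cons, Matrix.cons_val_three, Matrix.head_fin_const,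
    Matrix.cons_val_fin_one] at eqA eqB
  simp only [sub_zero, habs1, habs2, map_one, norm_one, Complex.ofReal_one, one_pow, div_one,
    mul_one] at eqA
  have habs01 : ‖(0 - 1 : ℂ)‖ = 1 := by simp
  simp only [habs1', habs2', habs01, Complex.ofReal_one, one_pow, div_one] at eqB
  have hs0 : (0:ℝ) < s := by linarith
  have hscube : ((s : ℝ) : ℂ)^3 ≠ 0 := by
    simp only [ne_eq, pow_eq_zero_iff, Complex.ofReal_eq_zero]
    norm_num
    linarith
  field_simp [Complex.ofReal_ne_zero.mpr hs0.ne'] at eqB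
  have hM : (0:ℝ) < m 0 + m 1 + m 2 + m 3 := by linarith [hm 0, hm 1, hm 2, hm 3]
  have hMne : ((m 0 + m 1 + m 2 + m 3 : ℝ) : ℂ) ≠ 0 := by exact_mod_cast ne_of_gt hM
  have E0 : c₀ * ((m 0 + m 1 + m 2 + m 3 : ℝ) : ℂ) = ↑(m 0)*q₁ + ↑(m 1)*q₂ + ↑(m 2) := by
    rw [hc₀, div_mul_cancel₀ _ hMne]; ring
  obtain ⟨cr, ci, hc⟩ : ∃ a b : ℝ, c₀ = (a:ℂ) + (b:ℝ)*I :=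
    ⟨c₀.re, c₀.im, (Complex.re_add_im c₀).symm⟩
  have hwc : ((ω:ℂ))^2 = ((ω^2 : ℝ):ℂ) := by norm_cast
  rw [h1, h2, hc, hwc] at eqA
  rw [h1, h2, hc, ← Complex.ofReal_pow, hwc] at eqB
  rw [h1, h2, hc] at E0
  rw [Complex.ext_iff] at eqA eqB E0
  simp only [Complex.add_re, Complex.add_im, Complex.sub_re, Complex.sub_im, Complex.mul_re,
    Complex.mul_im, Complex.neg_re, Complex.neg_im, Complex.one_re, Complex.one_im,
    Complex.zero_re, Complex.zero_im, Complex.I_re, Complex.I_im, Complex.ofReal_re,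
    Complex.ofReal_im] at eqA eqB E0
  obtain ⟨eAr, eAi⟩ := eqA
  obtain ⟨eBr, eBi⟩ := eqB
  obtain ⟨e0r, e0i⟩ := E0
  ring_nf at eAr eAi eBr eBi e0r e0i
  have hcube1 : 1 < s^3 := by nlinarith
  have hci : ci = 0 := by
    have h' : ci * (ω^2 * (s^3 - 1)) = 0 := by linear_combination eAi - eBi
    rcases mul_eq_zero.mp h' with h | h
    · exact h
    · have : 0 < ω^2 * (s^3 - 1) :=
        mul_pos (pow_pos hω 2) (by linarith)
      linarith
  have hm01 : m 0 = m 1 := by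
    have h' : (m 0 - m 1) * (s/2) = 0 := by
      rw [hci] at eAi; linear_combination eAi
    rcases mul_eq_zero.mp h' with h | h
    · linarith
    · linarith
  refine ⟨hm01, ?_⟩
  have hcr : cr * ((m 0 + m 1 + m 2 + m 3) - ω^2) = 0 := by linear_combination e0r + eAr
  rcases mul_eq_zero.mp hcr with h | h
  · rw [h] at eAr; linarith
  · exfalso
    have hz0 : m 0 * (s^3 - 1) * 3 = 0 := by
      linear_combination eBr - s^3 * eAr + s^3 * h + (3/2)*(s^3-1) * hm01
    have hp : 0 < m 0 * (s^3 - 1) := mul_pos (hm 0) (by linarith)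
    linarith
end

section
/- Let m_1, m_2, m_3, m_4 be positive reals satisfying the planar 4-body central configuration equations with x_1 = e^{2πi/3}, x_2 = e^{4πi/3}, x_3 = 1, x_4 = 0, angular velocity ω and center of mass c_0. Then adding the equation for k = 3 to the equation for k = 4 yields: (1−q_1)/|1−q_1|³ · m_1 + (1−q_2)/|1−q_2|³ · m_2 + m_4 + (m_1 q_1 + m_2 q_2 + m_3) = ω², a real number; and this implies m_1 = m_2. -/
open Complex Finset

/-- Planar 4-body problem with bodies at `q₁ = e^{2πi/3}`, `q₂ = e^{4πi/3}`, `1` and `0`.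
Adding the central configuration equation for `k = 3` to the one for `k = 4` yields
`(1−q₁)/|1−q₁|³ m₁ + (1−q₂)/|1−q₂|³ m₂ + m₄ + (m₁q₁ + m₂q₂ + m₃) = ω²`, a real number,
and this implies `m₁ = m₂`. -/
theorem four_body_sum_real_implies_equal
    (q₁ q₂ : ℂ)
    (hq₁ : q₁ = Complex.exp (2 * Real.pi * Complex.I / 3))
    (hq₂ : q₂ = Complex.exp (4 * Real.pi * Complex.I / 3))
    (m : Fin 4 → ℝ) (hm : ∀ j, 0 < m j)
    (x : Fin 4 → ℂ) (hx : x = ![q₁, q₂, 1, 0])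
    (ω : ℝ) (hω : 0 < ω)
    (c₀ : ℂ)
    (hc₀ : c₀ = (∑ j : Fin 4, (m j : ℂ) * x j) / ((∑ j : Fin 4, m j : ℝ) : ℂ))
    (hcc : ∀ k : Fin 4,
      ∑ j ∈ Finset.univ.erase k,
          (m j : ℂ) * (x j - x k) / ‖x j - x k‖^3
        = -((ω : ℂ)^2) * (x k - c₀)) :
    ((1 - q₁) / ‖1 - q₁‖^3 * (m 0 : ℂ)
      + (1 - q₂) / ‖1 - q₂‖^3 * (m 1 : ℂ) + (m 3 : ℂ)
      + ((m 0 : ℂ) * q₁ + (m 1 : ℂ) * q₂ + (m 2 : ℂ)) = ((ω^2 : ℝ) : ℂ))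
    ∧ m 0 = m 1 := by
  have hs : Real.sqrt 3 ^ 2 = 3 := Real.sq_sqrt (by norm_num)
  have hs0 : (0:ℝ) < Real.sqrt 3 := Real.sqrt_pos.mpr (by norm_num)
  set s := Real.sqrt 3 with hsdef
  have hq1' : q₁ = ⟨-1/2, s/2⟩ := by
    have h : (2 * (Real.pi:ℂ) * Complex.I / 3) = ((2*Real.pi/3 : ℝ):ℂ) * Complex.I := by
      push_cast; ring
    rw [hq₁, h, Complex.exp_mul_I, ← Complex.ofReal_cos, ← Complex.ofReal_sin]
    have hc : Real.cos (2*Real.pi/3) = -(1/2) := by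
      have h2 : 2*Real.pi/3 = Real.pi - Real.pi/3 := by ring
      rw [h2, Real.cos_pi_sub, Real.cos_pi_div_three]
    have hsn : Real.sin (2*Real.pi/3) = s / 2 := by
      have h2 : 2*Real.pi/3 = Real.pi - Real.pi/3 := by ring
      rw [h2, Real.sin_pi_sub, Real.sin_pi_div_three]
    rw [hc, hsn]
    apply Complex.ext <;> simp <;> norm_num
  have hq2' : q₂ = ⟨-1/2, -(s/2)⟩ := by
    have h : (4 * (Real.pi:ℂ) * Complex.I / 3) = ((4*Real.pi/3 : ℝ):ℂ) * Complex.I := by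
      push_cast; ring
    rw [hq₂, h, Complex.exp_mul_I, ← Complex.ofReal_cos, ← Complex.ofReal_sin]
    have hc : Real.cos (4*Real.pi/3) = -(1/2) := by
      have h2 : 4*Real.pi/3 = Real.pi/3 + Real.pi := by ring
      rw [h2, Real.cos_add_pi, Real.cos_pi_div_three]
    have hsn : Real.sin (4*Real.pi/3) = -(s / 2) := by
      have h2 : 4*Real.pi/3 = Real.pi/3 + Real.pi := by ring
      rw [h2, Real.sin_add_pi, Real.sin_pi_div_three]
    rw [hc, hsn]
    apply Complex.ext <;> simp <;> norm_num
  -- abs computations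
  have habs1 : ‖1 - q₁‖ = s := by
    rw [hq1', Complex.norm_def, Complex.normSq_apply]
    have : (1 - (⟨-1/2, s/2⟩:ℂ)).re = 3/2 ∧ (1 - (⟨-1/2, s/2⟩:ℂ)).im = -(s/2) := by
      constructor <;> simp [Complex.sub_re, Complex.sub_im, Complex.one_re, Complex.one_im] <;> norm_num
    rw [this.1, this.2]
    rw [show 3/2 * (3/2) + -(s/2) * -(s/2) = 9/4 + s^2/4 by ring, hs]
    norm_num [hsdef]
  have habs2 : ‖1 - q₂‖ = s := by
    rw [hq2', Complex.norm_def, Complex.normSq_apply]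
    have : (1 - (⟨-1/2, -(s/2)⟩:ℂ)).re = 3/2 ∧ (1 - (⟨-1/2, -(s/2)⟩:ℂ)).im = s/2 := by
      constructor <;> simp [Complex.sub_re, Complex.sub_im, Complex.one_re, Complex.one_im] <;> norm_num
    rw [this.1, this.2]
    rw [show 3/2 * (3/2) + s/2 * (s/2) = 9/4 + s^2/4 by ring, hs]
    norm_num [hsdef]
  have habsq1 : ‖q₁‖ = 1 := by
    rw [hq1', Complex.norm_def, Complex.normSq_apply]
    simp only
    rw [show -1/2 * (-1/2) + s/2 * (s/2) = 1/4 + s^2/4 by ring, hs]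
    norm_num
  have habsq2 : ‖q₂‖ = 1 := by
    rw [hq2', Complex.norm_def, Complex.normSq_apply]
    simp only
    rw [show -1/2 * (-1/2) + -(s/2) * -(s/2) = 1/4 + s^2/4 by ring, hs]
    norm_num
  -- the two equations
  have h2 := hcc 2
  have h3 := hcc 3
  rw [show (Finset.univ.erase (2:Fin 4)) = {0,1,3} from by decide] at h2
  rw [show (Finset.univ.erase (3:Fin 4)) = {0,1,2} from by decide] at h3
  rw [hx] at h2 h3
  rw [Finset.sum_insert (by decide), Finset.sum_insert (by decide), Finset.sum_singleton] at h2 h3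
  simp only [Matrix.cons_val_zero, Matrix.cons_val_one, Matrix.head_cons,
    Matrix.cons_val_two, Matrix.tail_cons, Matrix.cons_val_three] at h2 h3
  rw [show ‖q₁ - 1‖ = s from by rw [← habs1]; exact (norm_sub_rev _ _),
      show ‖q₂ - 1‖ = s from by rw [← habs2]; exact (norm_sub_rev _ _)] at h2
  norm_num at h2 h3
  rw [habsq1, habsq2] at h3
  have hE : (1 - q₁) / (s:ℂ)^3 * (m 0 : ℂ) + (1 - q₂) / (s:ℂ)^3 * (m 1 : ℂ) + (m 3 : ℂ)
      + ((m 0 : ℂ) * q₁ + (m 1 : ℂ) * q₂ + (m 2 : ℂ)) = ((ω:ℂ))^2 := by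
    push_cast at h3
    linear_combination h3 - h2
  constructor
  · rw [habs1, habs2]
    push_cast
    exact hE
  · have him := congrArg Complex.im hE
    rw [show ((s:ℂ))^3 = ((s^3 : ℝ):ℂ) from by push_cast; ring] at him
    simp only [hq1', hq2', Complex.add_im, Complex.div_ofReal_im, Complex.mul_im,
      Complex.mul_re, Complex.ofReal_re, Complex.ofReal_im, Complex.sub_im, Complex.sub_re,
      Complex.one_im, Complex.one_re, ← Complex.ofReal_pow] at him
    norm_num at him
    have hs3 : s^3 = 3 * s := by nlinarith
    rw [hs3] at him
    have hsne : (3:ℝ) * s ≠ 0 := by positivity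
    field_simp at him
    have hs1 : 1 < s := by nlinarith
    have key : (m 0 - m 1) * (108*s - 36) = 0 := by
      linear_combination 36 * him
    have hpos : 108*s - 36 > 0 := by nlinarith
    have := mul_eq_zero.mp key
    rcases this with h | h
    · linarith
    · linarith
end
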